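/- Let A and B be real 2×2 matrices with determinant 1 that commute, and suppose each of A and B either equals ±I or has two distinct complex-conjugate eigenvalues e^{±iη} with η ∈ (0,π) ∪ (π,2π). Then there exists a real invertible 2×2 matrix M and angles η_A, η_B such that M A M⁻¹ and M B M⁻¹ are simultaneously the rotation matrices [[cos η_A, -sin η_A],[sin η_A, cos η_A]] and [[cos η_B, -sin η_B],[sin η_B, cos η_B]]. -/

import Mathlib

open Real

noncomputable def rot (θ : ℝ) : Matrix (Fin 2) (Fin 2) ℝ :=
  Matrix.of ![![Real.cos θ, -Real.sin θ], ![Real.sin θ, Real.cos θ]]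

lemma rot_zero : rot 0 = 1 := by
  ext i j; fin_cases i <;> fin_cases j <;> simp [rot, Matrix.one_apply]

lemma rot_pi : rot π = -1 := by
  ext i j; fin_cases i <;> fin_cases j <;> simp [rot, Matrix.one_apply]

lemma colP (C : Matrix (Fin 2) (Fin 2) ℝ) (θ : ℝ) (v : Fin 2 → ℂ)
    (h : (C.map (fun r => (r : ℂ))).mulVec v = Complex.exp (θ * Complex.I) • v) :
    C * (Matrix.of ![![(v 0).re, (v 0).im], ![(v 1).re, (v 1).im]]) =
      (Matrix.of ![![(v 0).re, (v 0).im], ![(v 1).re, (v 1).im]]) * rot (-θ) := by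
  have h0 := congrFun h 0
  have h1 := congrFun h 1
  simp [Matrix.mulVec, dotProduct, Fin.sum_univ_two, Matrix.map_apply,
    Complex.ext_iff, Complex.exp_ofReal_mul_I_re, Complex.exp_ofReal_mul_I_im] at h0 h1
  obtain ⟨h0r, h0i⟩ := h0
  obtain ⟨h1r, h1i⟩ := h1
  ext i j
  fin_cases i <;> fin_cases j <;>
    simp [rot, Matrix.mul_apply, Fin.sum_univ_two] <;> linarith

lemma key (C A : Matrix (Fin 2) (Fin 2) ℝ) (hA1 : A.det = 1)
    (hcomm : A * C = C * A) (η : ℝ) (hη : Real.sin η ≠ 0)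
    (v : Fin 2 → ℂ) (hv : v ≠ 0)
    (hCv : (C.map (fun r => (r : ℂ))).mulVec v = Complex.exp (η * Complex.I) • v) :
    ∃ M : Matrix (Fin 2) (Fin 2) ℝ, IsUnit M.det ∧ ∃ ηA ηC : ℝ,
      M * A * M⁻¹ = rot ηA ∧ M * C * M⁻¹ = rot ηC := by
  set μ : ℂ := Complex.exp (η * Complex.I) with hμdef
  have hμim : μ.im = Real.sin η := Complex.exp_ofReal_mul_I_im η
  have hμconj : (starRingEnd ℂ) μ ≠ μ := by
    intro h
    have := Complex.conj_eq_iff_im.mp h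
    rw [hμim] at this; exact hη this
  have h0 := congrFun hCv 0
  have h1 := congrFun hCv 1
  simp only [Matrix.mulVec, dotProduct, Fin.sum_univ_two, Matrix.map_apply,
    Pi.smul_apply, smul_eq_mul] at h0 h1
  set w : Fin 2 → ℂ := fun i => (starRingEnd ℂ) (v i) with hw
  have h0c : (C 0 0 : ℂ) * w 0 + (C 0 1 : ℂ) * w 1 = (starRingEnd ℂ) μ * w 0 := by
    have := congrArg (starRingEnd ℂ) h0
    simpa [hw, map_add, map_mul, Complex.conj_ofReal] using this
  have h1c : (C 1 0 : ℂ) * w 0 + (C 1 1 : ℂ) * w 1 = (starRingEnd ℂ) μ * w 1 := by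
    have := congrArg (starRingEnd ℂ) h1
    simpa [hw, map_add, map_mul, Complex.conj_ofReal] using this
  have hvi : v 0 ≠ 0 ∨ v 1 ≠ 0 := by
    by_contra h
    push_neg at h
    apply hv; funext i; fin_cases i <;> simp [h.1, h.2]
  have hv0 : v 0 ≠ 0 := by
    intro h00
    have h' : v 1 ≠ 0 := by
      rcases hvi with h' | h'
      · exact absurd h00 h'
      · exact h'
    rw [h00, mul_zero] at h0
    have hC01 : (C 0 1 : ℂ) * v 1 = 0 := by linear_combination h0
    have hC01 : (C 0 1 : ℂ) = 0 := (mul_eq_zero.mp hC01).resolve_right h'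
    rw [h00] at h1
    have : (C 1 1 : ℂ) * v 1 = μ * v 1 := by linear_combination h1
    have hCμ : (C 1 1 : ℂ) = μ := mul_right_cancel₀ h' this
    have : μ.im = 0 := by rw [← hCμ]; simp
    rw [hμim] at this; exact hη this
  have hv1 : v 1 ≠ 0 := by
    intro h11
    rw [h11, mul_zero] at h1
    have hC10 : (C 1 0 : ℂ) * v 0 = 0 := by linear_combination h1
    have hC10 : (C 1 0 : ℂ) = 0 := (mul_eq_zero.mp hC10).resolve_right hv0
    rw [h11] at h0
    have : (C 0 0 : ℂ) * v 0 = μ * v 0 := by linear_combination h0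
    have hCμ : (C 0 0 : ℂ) = μ := mul_right_cancel₀ hv0 this
    have : μ.im = 0 := by rw [← hCμ]; simp
    rw [hμim] at this; exact hη this
  have hw0 : w 0 ≠ 0 := by simp [hw, hv0]
  have hw1 : w 1 ≠ 0 := by simp [hw, hv1]
  set D : ℂ := v 0 * w 1 - v 1 * w 0 with hD
  have hDne : D ≠ 0 := by
    intro hD0
    have hD0' : v 0 * w 1 = v 1 * w 0 := by linear_combination hD0
    have : μ * (v 1 * w 0) = (starRingEnd ℂ) μ * (v 1 * w 0) := by
      linear_combination (-(w 0)) * h1 + v 0 * h1c + ((starRingEnd ℂ) μ - (C 1 1 : ℂ)) * hD0'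
    have := mul_right_cancel₀ (mul_ne_zero hv1 hw0) this
    exact hμconj this.symm
  -- commutation entries, complexified
  have hcc : ∀ i j, ((A * C) i j : ℂ) = ((C * A) i j : ℂ) := fun i j => by rw [hcomm]
  have hc00 := hcc 0 0
  have hc01 := hcc 0 1
  have hc10 := hcc 1 0
  have hc11 := hcc 1 1
  simp only [Matrix.mul_apply, Fin.sum_univ_two] at hc00 hc01 hc10 hc11
  push_cast at hc00 hc01 hc10 hc11
  -- u = A v
  set u0 : ℂ := (A 0 0 : ℂ) * v 0 + (A 0 1 : ℂ) * v 1 with hu0def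
  set u1 : ℂ := (A 1 0 : ℂ) * v 0 + (A 1 1 : ℂ) * v 1 with hu1def
  have g0 : (C 0 0 : ℂ) * u0 + (C 0 1 : ℂ) * u1 = μ * u0 := by
    rw [hu0def, hu1def]
    linear_combination (A 0 0 : ℂ) * h0 + (A 0 1 : ℂ) * h1 - v 0 * hc00 - v 1 * hc01
  set a : ℂ := (u0 * w 1 - u1 * w 0) / D with ha
  set b : ℂ := (v 0 * u1 - v 1 * u0) / D with hb
  have hu0 : u0 = a * v 0 + b * w 0 := by rw [ha, hb]; field_simp; ring
  have hu1 : u1 = a * v 1 + b * w 1 := by rw [ha, hb]; field_simp; ring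
  clear_value a b
  have hb0 : b = 0 := by
    have key : b * ((starRingEnd ℂ) μ - μ) * w 0 = 0 := by
      linear_combination g0 - a * h0 - b * h0c - (C 0 0 : ℂ) * hu0 - (C 0 1 : ℂ) * hu1 + μ * hu0
    rcases mul_eq_zero.mp key with h | h
    · rcases mul_eq_zero.mp h with h | h
      · exact h
      · exact absurd (by linear_combination h) hμconj
    · exact absurd h hw0
  have hAv0' : (A 0 0 : ℂ) * v 0 + (A 0 1 : ℂ) * v 1 = a * v 0 := by
    rw [← hu0def, hu0, hb0]; ring
  have hAv1' : (A 1 0 : ℂ) * v 0 + (A 1 1 : ℂ) * v 1 = a * v 1 := by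
    rw [← hu1def, hu1, hb0]; ring
  have hAw0' : (A 0 0 : ℂ) * w 0 + (A 0 1 : ℂ) * w 1 = (starRingEnd ℂ) a * w 0 := by
    have := congrArg (starRingEnd ℂ) hAv0'
    simpa [hw, map_add, map_mul, Complex.conj_ofReal] using this
  have hAw1' : (A 1 0 : ℂ) * w 0 + (A 1 1 : ℂ) * w 1 = (starRingEnd ℂ) a * w 1 := by
    have := congrArg (starRingEnd ℂ) hAv1'
    simpa [hw, map_add, map_mul, Complex.conj_ofReal] using this
  -- determinant argument: a * conj a = 1
  have haa : a * (starRingEnd ℂ) a = 1 := by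
    have hQdet : ((A.map (fun r => (r : ℂ))) * Matrix.of ![![v 0, w 0], ![v 1, w 1]]).det =
        (Matrix.of ![![v 0, w 0], ![v 1, w 1]] * Matrix.of ![![a, 0], ![0, (starRingEnd ℂ) a]]).det := by
      congr 1
      ext i j
      fin_cases i <;> fin_cases j
      · simp [Matrix.mul_apply, Fin.sum_univ_two]; linear_combination hAv0'
      · simp [Matrix.mul_apply, Fin.sum_univ_two]; linear_combination hAw0'
      · simp [Matrix.mul_apply, Fin.sum_univ_two]; linear_combination hAv1'
      · simp [Matrix.mul_apply, Fin.sum_univ_two]; linear_combination hAw1'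
    rw [Matrix.det_mul, Matrix.det_mul] at hQdet
    have hdA : (A.map (fun r => (r : ℂ))).det = 1 := by
      rw [Matrix.det_fin_two] at hA1 ⊢
      simp only [Matrix.map_apply]
      push_cast
      exact_mod_cast congrArg (fun x : ℝ => (x : ℂ)) hA1
    have hdQ : (Matrix.of ![![v 0, w 0], ![v 1, w 1]] : Matrix (Fin 2) (Fin 2) ℂ).det = D := by
      rw [Matrix.det_fin_two, hD]; simp; ring
    have hdR : (Matrix.of ![![a, 0], ![0, (starRingEnd ℂ) a]] : Matrix (Fin 2) (Fin 2) ℂ).det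
        = a * (starRingEnd ℂ) a := by
      rw [Matrix.det_fin_two]; simp
    rw [hdA, hdQ, hdR, one_mul] at hQdet
    have h2 : D * 1 = D * (a * (starRingEnd ℂ) a) := by rw [mul_one]; exact hQdet
    exact (mul_left_cancel₀ hDne h2).symm
  have habs : ‖a‖ = 1 := by
    have hns : Complex.normSq a = 1 := by
      have : ((Complex.normSq a : ℝ) : ℂ) = 1 := by rw [← Complex.mul_conj]; exact haa
      exact_mod_cast this
    rw [Complex.norm_def, hns, Real.sqrt_one]
  have haθ : Complex.exp ((a.arg : ℂ) * Complex.I) = a := by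
    have := Complex.norm_mul_exp_arg_mul_I a
    rwa [habs, Complex.ofReal_one, one_mul] at this
  have hAvec : (A.map (fun r => (r : ℂ))).mulVec v = Complex.exp ((a.arg : ℂ) * Complex.I) • v := by
    funext i
    simp only [Matrix.mulVec, dotProduct, Fin.sum_univ_two, Matrix.map_apply,
      Pi.smul_apply, smul_eq_mul, haθ]
    fin_cases i
    · exact hAv0'
    · exact hAv1'
  -- the real change of basis
  set P : Matrix (Fin 2) (Fin 2) ℝ :=
    Matrix.of ![![(v 0).re, (v 0).im], ![(v 1).re, (v 1).im]] with hP
  have hPD : D = -(2 * Complex.I) * ((P.det : ℝ) : ℂ) := by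
    rw [hP, Matrix.det_fin_two]
    apply Complex.ext <;>
      simp [hD, hw, Complex.mul_re, Complex.mul_im] <;> ring
  have hPdet : IsUnit P.det := by
    rw [isUnit_iff_ne_zero]
    intro h
    rw [h] at hPD
    simp at hPD
    exact hDne hPD
  have hAP := colP A a.arg v hAvec
  have hCP := colP C η v hCv
  rw [← hP] at hAP hCP
  refine ⟨P⁻¹, Matrix.isUnit_nonsing_inv_det P hPdet, -a.arg, -η, ?_, ?_⟩
  · rw [Matrix.nonsing_inv_nonsing_inv P hPdet, mul_assoc, hAP, ← mul_assoc,
      Matrix.nonsing_inv_mul P hPdet, one_mul]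
  · rw [Matrix.nonsing_inv_nonsing_inv P hPdet, mul_assoc, hCP, ← mul_assoc,
      Matrix.nonsing_inv_mul P hPdet, one_mul]


lemma sin_ne (η : ℝ) (h : η ∈ Set.Ioo 0 π ∪ Set.Ioo π (2 * π)) : Real.sin η ≠ 0 := by
  rcases h with h | h
  · exact ne_of_gt (Real.sin_pos_of_pos_of_lt_pi h.1 h.2)
  · have h1 : 0 < η - π := by linarith [h.1]
    have h2 : η - π < π := by linarith [h.2]
    have := Real.sin_pos_of_pos_of_lt_pi h1 h2
    rw [Real.sin_sub_pi] at this
    intro h0; rw [h0] at this; simp at this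

lemma conj_pm (M X : Matrix (Fin 2) (Fin 2) ℝ) (hM : IsUnit M.det)
    (hX : X = 1 ∨ X = -1) : ∃ θ : ℝ, M * X * M⁻¹ = rot θ := by
  rcases hX with h | h
  · exact ⟨0, by rw [h, mul_one, Matrix.mul_nonsing_inv M hM, rot_zero]⟩
  · refine ⟨π, ?_⟩
    rw [h, rot_pi, mul_neg_one, Matrix.neg_mul, Matrix.mul_nonsing_inv M hM]

lemma aux (A B : Matrix (Fin 2) (Fin 2) ℝ) (hB1 : B.det = 1)
    (hcomm : A * B = B * A) (hAtriv : A = 1 ∨ A = -1)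
    (hB : B = 1 ∨ B = -1 ∨ ∃ η : ℝ, η ∈ Set.Ioo 0 π ∪ Set.Ioo π (2 * π) ∧
      ∃ v : Fin 2 → ℂ, v ≠ 0 ∧
        (B.map (fun r => (r : ℂ))).mulVec v = Complex.exp (η * Complex.I) • v) :
    ∃ M : Matrix (Fin 2) (Fin 2) ℝ, IsUnit M.det ∧ ∃ ηA ηB : ℝ,
      M * A * M⁻¹ = rot ηA ∧ M * B * M⁻¹ = rot ηB := by
  have hM1 : IsUnit (1 : Matrix (Fin 2) (Fin 2) ℝ).det := by simp
  have hA1' : A.det = 1 := by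
    rcases hAtriv with h | h <;> rw [h] <;> simp [Matrix.det_neg]
  rcases hB with hB | hB | ⟨η, hη, v, hv, hBv⟩
  · obtain ⟨θA, h⟩ := conj_pm 1 A hM1 hAtriv
    obtain ⟨θB, h'⟩ := conj_pm 1 B hM1 (Or.inl hB)
    exact ⟨1, hM1, θA, θB, h, h'⟩
  · obtain ⟨θA, h⟩ := conj_pm 1 A hM1 hAtriv
    obtain ⟨θB, h'⟩ := conj_pm 1 B hM1 (Or.inr hB)
    exact ⟨1, hM1, θA, θB, h, h'⟩
  · exact key B A hA1' hcomm η (sin_ne η hη) v hv hBv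

/-- Two commuting real `SL(2)` matrices, each equal to `±I` or having two
distinct complex-conjugate eigenvalues `e^{±iη}` with `η ∈ (0,π) ∪ (π,2π)`, can be
simultaneously conjugated (by a real invertible matrix) to rotation matrices. -/
theorem stmt2 (A B : Matrix (Fin 2) (Fin 2) ℝ)
    (hA1 : A.det = 1) (hB1 : B.det = 1) (hcomm : A * B = B * A)
    (hA : A = 1 ∨ A = -1 ∨ ∃ η : ℝ, η ∈ Set.Ioo 0 π ∪ Set.Ioo π (2 * π) ∧
      ∃ v : Fin 2 → ℂ, v ≠ 0 ∧
        (A.map (fun r => (r : ℂ))).mulVec v = Complex.exp (η * Complex.I) • v)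
    (hB : B = 1 ∨ B = -1 ∨ ∃ η : ℝ, η ∈ Set.Ioo 0 π ∪ Set.Ioo π (2 * π) ∧
      ∃ v : Fin 2 → ℂ, v ≠ 0 ∧
        (B.map (fun r => (r : ℂ))).mulVec v = Complex.exp (η * Complex.I) • v) :
    ∃ M : Matrix (Fin 2) (Fin 2) ℝ, IsUnit M.det ∧ ∃ ηA ηB : ℝ,
      M * A * M⁻¹ = Matrix.of ![![Real.cos ηA, -Real.sin ηA], ![Real.sin ηA, Real.cos ηA]] ∧
      M * B * M⁻¹ = Matrix.of ![![Real.cos ηB, -Real.sin ηB], ![Real.sin ηB, Real.cos ηB]] := by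
  have main : ∃ M : Matrix (Fin 2) (Fin 2) ℝ, IsUnit M.det ∧ ∃ ηA ηB : ℝ,
      M * A * M⁻¹ = rot ηA ∧ M * B * M⁻¹ = rot ηB := by
    rcases hA with hA | hA | ⟨η, hη, v, hv, hAv⟩
    · exact aux A B hB1 hcomm (Or.inl hA) hB
    · exact aux A B hB1 hcomm (Or.inr hA) hB
    · obtain ⟨M, hM, θB, θA, h1, h2⟩ := key A B hB1 hcomm.symm η (sin_ne η hη) v hv hAv
      exact ⟨M, hM, θA, θB, h2, h1⟩
  obtain ⟨M, hM, θA, θB, h1, h2⟩ := main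
  exact ⟨M, hM, θA, θB, h1, h2⟩
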